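/- Let Φ be a Young function. If there exist q ∈ (0,∞) and C ∈ [1,∞) such that (1/t)·Φ⁻¹(1/t)^{-q} ≤ C·(1/s)·Φ⁻¹(1/s)^{-q} for all 0 < t ≤ s, then Φ satisfies the Δ₂-condition. -/

import Mathlib

open MeasureTheory ENNReal NNReal

noncomputable section

/-- A Young function `Φ : [0,∞] → [0,∞]`: increasing, convex, `Φ(0)=0`, `Φ(∞)=∞`,
`lim_{t→0}Φ(t)=0`, with `a(Φ)<∞` and `b(Φ)>0`. -/
structure YoungFunction (Φ : ℝ≥0∞ → ℝ≥0∞) : Prop where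
  mono : Monotone Φ
  map_zero : Φ 0 = 0
  map_top : Φ ⊤ = ⊤
  convex : ∀ (a b : ℝ≥0) (x y : ℝ≥0∞), a + b = 1 →
    Φ ((a : ℝ≥0∞) * x + (b : ℝ≥0∞) * y) ≤ (a : ℝ≥0∞) * Φ x + (b : ℝ≥0∞) * Φ y
  tendsto_zero : Filter.Tendsto Φ (nhdsWithin 0 (Set.Ioi 0)) (nhds 0)
  exists_pos : ∃ t : ℝ≥0∞, t ≠ ⊤ ∧ 0 < Φ t
  exists_finite : ∃ t : ℝ≥0∞, 0 < t ∧ Φ t < ⊤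

/-- The generalized inverse `Φ⁻¹(u) = inf{t ≥ 0 : Φ(t) > u}` (with `inf ∅ = ∞`,
so `Φ⁻¹(∞) = ∞`). -/
def yinv (Φ : ℝ≥0∞ → ℝ≥0∞) (u : ℝ≥0∞) : ℝ≥0∞ := sInf {t | u < Φ t}

lemma phi_le_of_lt_yinv {Φ : ℝ≥0∞ → ℝ≥0∞} {w t : ℝ≥0∞} (h : t < yinv Φ w) : Φ t ≤ w := by
  by_contra hc
  exact absurd (sInf_le (show t ∈ {t | w < Φ t} from lt_of_not_ge hc)) (not_le.2 h)

lemma le_yinv_of_phi_le {Φ : ℝ≥0∞ → ℝ≥0∞} (m : Monotone Φ) {w r : ℝ≥0∞} (hr : Φ r ≤ w) :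
    r ≤ yinv Φ w := by
  refine le_sInf fun t ht => ?_
  by_contra hc
  push_neg at hc
  exact absurd ht (not_lt.2 ((m hc.le).trans hr))

lemma yinv_le_of_lt {Φ : ℝ≥0∞ → ℝ≥0∞} {w t : ℝ≥0∞} (h : w < Φ t) : yinv Φ w ≤ t := sInf_le h

lemma rpow_neg_le_rpow_neg {q : ℝ} (hq : 0 < q) {x y : ℝ≥0∞} (hxy : x ≤ y) :
    y ^ (-q) ≤ x ^ (-q) := by
  rw [ENNReal.rpow_neg, ENNReal.rpow_neg]
  exact ENNReal.inv_le_inv.2 (ENNReal.rpow_le_rpow hxy hq.le)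

lemma rpow_neg_lt_rpow_neg {q : ℝ} (hq : 0 < q) {x y : ℝ≥0∞} (hxy : x < y) :
    y ^ (-q) < x ^ (-q) := by
  rw [ENNReal.rpow_neg, ENNReal.rpow_neg]
  exact ENNReal.inv_lt_inv.2 (ENNReal.rpow_lt_rpow hxy hq)

lemma rpow_neg_pos {q : ℝ} (hq : 0 < q) {x : ℝ≥0∞} (hx : x ≠ ⊤) : 0 < x ^ (-q) := by
  rw [pos_iff_ne_zero, Ne, ENNReal.rpow_eq_zero_iff]
  rintro (⟨-, h⟩ | ⟨h, -⟩)
  · linarith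
  · exact hx h

lemma rpow_neg_ne_top {q : ℝ} (hq : 0 < q) {x : ℝ≥0∞} (hx : x ≠ 0) : x ^ (-q) ≠ ⊤ := by
  rw [Ne, ENNReal.rpow_eq_top_iff]
  rintro (⟨h, -⟩ | ⟨-, h⟩)
  · exact hx h
  · linarith

lemma h_translated {Φ : ℝ≥0∞ → ℝ≥0∞} {q : ℝ} {C : ℝ≥0}
    (h : ∀ t s : ℝ≥0∞, 0 < t → t ≤ s → s ≠ ⊤ →
      t⁻¹ * (yinv Φ t⁻¹) ^ (-q) ≤ (C : ℝ≥0∞) * (s⁻¹ * (yinv Φ s⁻¹) ^ (-q)))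
    {u v : ℝ≥0∞} (hv : 0 < v) (hvu : v ≤ u) (hu : u ≠ ⊤) :
    u * (yinv Φ u) ^ (-q) ≤ (C : ℝ≥0∞) * (v * (yinv Φ v) ^ (-q)) := by
  have h1 : (0:ℝ≥0∞) < u⁻¹ := ENNReal.inv_pos.2 hu
  have h2 : u⁻¹ ≤ v⁻¹ := ENNReal.inv_le_inv.2 hvu
  have h3 : v⁻¹ ≠ ⊤ := by simp [ENNReal.inv_ne_top, hv.ne']
  have := h u⁻¹ v⁻¹ h1 h2 h3
  simpa [inv_inv] using this

lemma phi_pos {Φ : ℝ≥0∞ → ℝ≥0∞} (hΦ : YoungFunction Φ) {q : ℝ} {C : ℝ≥0}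
    (hq : 0 < q) (hC : 1 ≤ C)
    (h : ∀ t s : ℝ≥0∞, 0 < t → t ≤ s → s ≠ ⊤ →
      t⁻¹ * (yinv Φ t⁻¹) ^ (-q) ≤ (C : ℝ≥0∞) * (s⁻¹ * (yinv Φ s⁻¹) ^ (-q)))
    {r : ℝ≥0∞} (hr : 0 < r) : 0 < Φ r := by
  by_contra hc
  push_neg at hc
  have hr0 : Φ r = 0 := le_antisymm hc (zero_le)
  have hrtop : r ≠ ⊤ := by
    intro he; rw [he, hΦ.map_top] at hr0; exact ENNReal.top_ne_zero hr0
  obtain ⟨t₀, ht₀top, ht₀pos⟩ := hΦ.exists_pos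
  have ht₀0 : t₀ ≠ 0 := by
    intro he; rw [he, hΦ.map_zero] at ht₀pos; exact lt_irrefl _ ht₀pos
  have hC0 : (C : ℝ≥0∞) ≠ 0 := by
    simpa using (one_pos.trans_le (ENNReal.one_le_coe_iff.2 hC)).ne'
  -- choose u₀ with 0 < u₀ < Φ t₀, u₀ ≤ 1
  set u₀ : ℝ≥0∞ := min 1 (Φ t₀ / 2) with hu₀def
  have hu₀pos : 0 < u₀ := lt_min one_pos (ENNReal.div_pos ht₀pos.ne' ofNat_ne_top)
  have hu₀top : u₀ ≠ ⊤ := ne_top_of_le_ne_top one_ne_top (min_le_left _ _)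
  have hu₀lt : u₀ < Φ t₀ := by
    rcases eq_or_ne (Φ t₀) ⊤ with he | he
    · exact lt_of_le_of_lt (min_le_left _ _) (by rw [he]; exact one_lt_top)
    · exact lt_of_le_of_lt (min_le_right _ _) (ENNReal.half_lt_self ht₀pos.ne' he)
  have hyu₀ : yinv Φ u₀ ≤ t₀ := yinv_le_of_lt hu₀lt
  set A : ℝ≥0∞ := u₀ * t₀ ^ (-q) with hAdef
  have hApos : 0 < A := ENNReal.mul_pos hu₀pos.ne' (rpow_neg_pos hq ht₀top).ne'
  have hAtop : A ≠ ⊤ := ENNReal.mul_ne_top hu₀top (rpow_neg_ne_top hq ht₀0)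
  set B : ℝ≥0∞ := (C : ℝ≥0∞) * r ^ (-q) with hBdef
  have hB0 : B ≠ 0 := by
    exact (ENNReal.mul_pos hC0 (rpow_neg_pos hq hrtop).ne').ne'
  have hBtop : B ≠ ⊤ := ENNReal.mul_ne_top ENNReal.coe_ne_top (rpow_neg_ne_top hq hr.ne')
  set v₁ : ℝ≥0∞ := min u₀ (A / 2 * B⁻¹) with hv₁def
  have hv₁pos : 0 < v₁ :=
    lt_min hu₀pos (ENNReal.mul_pos (ENNReal.div_pos hApos.ne' ofNat_ne_top).ne'
      (ENNReal.inv_ne_zero.2 hBtop))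
  have k1 : A ≤ u₀ * (yinv Φ u₀) ^ (-q) :=
    mul_le_mul_right (rpow_neg_le_rpow_neg hq hyu₀) u₀
  have k2 := h_translated h hv₁pos (min_le_left _ _) hu₀top
  have hyv₁ : r ≤ yinv Φ v₁ := le_yinv_of_phi_le hΦ.mono (by rw [hr0]; exact zero_le)
  have k3 : (C : ℝ≥0∞) * (v₁ * (yinv Φ v₁) ^ (-q)) ≤ B * v₁ := by
    calc (C : ℝ≥0∞) * (v₁ * (yinv Φ v₁) ^ (-q))
        ≤ (C : ℝ≥0∞) * (v₁ * r ^ (-q)) :=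
          mul_le_mul_right (mul_le_mul_right (rpow_neg_le_rpow_neg hq hyv₁) v₁) _
      _ = B * v₁ := by rw [hBdef]; ring
  have k4 : B * v₁ ≤ A / 2 := by
    calc B * v₁ ≤ B * (A / 2 * B⁻¹) := mul_le_mul_right (min_le_right _ _) B
      _ = A / 2 * (B * B⁻¹) := by ring
      _ = A / 2 := by rw [ENNReal.mul_inv_cancel hB0 hBtop, mul_one]
  have hAA : A ≤ A / 2 := k1.trans (k2.trans (k3.trans k4))
  exact absurd hAA (not_le.2 (ENNReal.half_lt_self hApos.ne' hAtop))

/-- the almost-decreasing estimate implies Delta2. -/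
theorem stmt5 (Φ : ℝ≥0∞ → ℝ≥0∞) (hΦ : YoungFunction Φ) (q : ℝ) (C : ℝ≥0)
    (hq : 0 < q) (hC : 1 ≤ C)
    (h : ∀ t s : ℝ≥0∞, 0 < t → t ≤ s → s ≠ ⊤ →
      t⁻¹ * (yinv Φ t⁻¹) ^ (-q) ≤ (C : ℝ≥0∞) * (s⁻¹ * (yinv Φ s⁻¹) ^ (-q))) :
    ∃ k : ℝ≥0, 1 < k ∧ ∀ r : ℝ≥0∞, 0 < r → Φ (2 * r) ≤ (k : ℝ≥0∞) * Φ r := by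
  set k : ℝ≥0 := C * (4 : ℝ≥0) ^ q with hkdef
  have hk1 : 1 < k :=
    lt_of_lt_of_le (NNReal.one_lt_rpow (by norm_num) hq) (le_mul_of_one_le_left (zero_le) hC)
  have hk0 : (k : ℝ≥0∞) ≠ 0 := by
    simpa using (one_pos.trans hk1).ne'
  have hcoe : ((k : ℝ≥0) : ℝ≥0∞) = (C : ℝ≥0∞) * (4 : ℝ≥0∞) ^ q := by
    rw [hkdef, ENNReal.coe_mul, ENNReal.coe_rpow_of_ne_zero (by norm_num)]
    norm_num
  refine ⟨k, hk1, fun r hr => ?_⟩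
  rcases eq_or_ne r ⊤ with hrt | hrt
  · rw [hrt, show (2 : ℝ≥0∞) * ⊤ = ⊤ by simp, hΦ.map_top, ENNReal.mul_top hk0]
  set v := Φ r with hvdef
  have hv0 : 0 < v := phi_pos hΦ hq hC h hr
  have hk1' : (1 : ℝ≥0∞) ≤ (k : ℝ≥0∞) := ENNReal.one_le_coe_iff.2 hk1.le
  rcases eq_or_ne v ⊤ with hvt | hvt
  · rw [hvt, ENNReal.mul_top hk0]
    exact le_top
  set b := yinv Φ v with hbdef
  have hrb : r ≤ b := le_yinv_of_phi_le hΦ.mono le_rfl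
  have hb0 : b ≠ 0 := (hr.trans_le hrb).ne'
  rcases eq_or_ne b ⊤ with hbt | hbt
  · have h2r : 2 * r < yinv Φ v := by
      rw [← hbdef, hbt]
      exact lt_top_iff_ne_top.2 (ENNReal.mul_ne_top ofNat_ne_top hrt)
    exact (phi_le_of_lt_yinv h2r).trans (le_mul_of_one_le_left (zero_le) hk1')
  set L : ℝ≥0∞ := (C : ℝ≥0∞) * (4 : ℝ≥0∞) ^ q with hLdef
  have h4qtop : (4 : ℝ≥0∞) ^ q ≠ ⊤ := ENNReal.rpow_ne_top_of_nonneg hq.le (by norm_num)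
  have h4q0 : (4 : ℝ≥0∞) ^ q ≠ 0 := by
    rw [Ne, ENNReal.rpow_eq_zero_iff]
    rintro (⟨h4, -⟩ | ⟨h4, -⟩) <;> simp at h4
  have hL1 : (1 : ℝ≥0∞) ≤ L := by rw [← hcoe]; exact hk1'
  have hLtop : L ≠ ⊤ := ENNReal.mul_ne_top ENNReal.coe_ne_top h4qtop
  have hL0 : L ≠ 0 := (one_pos.trans_le hL1).ne'
  have hmain : 2 * r < yinv Φ (L * v) := by
    by_contra hcon
    push_neg at hcon
    set a := yinv Φ (L * v) with hadef
    have h2r4r : (2 : ℝ≥0∞) * r < 4 * r :=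
      ENNReal.mul_lt_mul_left hr.ne' hrt (by norm_num)
    have hab : a < 4 * b := lt_of_le_of_lt hcon (h2r4r.trans_le (mul_le_mul_right hrb 4))
    have key := h_translated h hv0 (le_mul_of_one_le_left (zero_le) hL1)
      (ENNReal.mul_ne_top hLtop hvt)
    have h4 : (4 : ℝ≥0∞) ^ q * (4 : ℝ≥0∞) ^ (-q) = 1 := by
      rw [ENNReal.rpow_neg]
      exact ENNReal.mul_inv_cancel h4q0 h4qtop
    have heq : (C : ℝ≥0∞) * (v * b ^ (-q)) = L * v * (4 * b) ^ (-q) := by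
      rw [ENNReal.mul_rpow_of_ne_zero (by norm_num) hb0]
      calc (C : ℝ≥0∞) * (v * b ^ (-q))
          = (C : ℝ≥0∞) * ((4 : ℝ≥0∞) ^ q * (4 : ℝ≥0∞) ^ (-q)) * (v * b ^ (-q)) := by
            rw [h4, mul_one]
        _ = L * v * ((4 : ℝ≥0∞) ^ (-q) * b ^ (-q)) := by rw [hLdef]; ring
    have hlt : L * v * (4 * b) ^ (-q) < L * v * a ^ (-q) :=
      ENNReal.mul_lt_mul_right (ENNReal.mul_pos hL0 hv0.ne').ne'
        (ENNReal.mul_ne_top hLtop hvt) (rpow_neg_lt_rpow_neg hq hab)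
    rw [← heq] at hlt
    exact lt_irrefl _ (lt_of_lt_of_le hlt key)
  calc Φ (2 * r) ≤ L * v := phi_le_of_lt_yinv hmain
    _ = (k : ℝ≥0∞) * Φ r := by rw [hcoe, hvdef]
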